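/- Let X be a countable collection of languages with topology T. A language L' ∈ X is a limit point of X in (X, T) if and only if there exists an infinite perfect tower of pairwise distinct languages from X with terminal language L'. -/

import Mathlib

/-- The sets `B_k` associated with a sequence of languages:
`B_0 = ⋂_i Λ i` and `B_k = (⋂_{i ≥ k} Λ i) \ (B_0 ∪ ⋯ ∪ B_{k-1})`. -/
def towerB (Λ : ℕ → Set ℕ) : ℕ → Set ℕ
  | k => {w | ∀ i, k ≤ i → w ∈ Λ i} \ {w | ∃ m, ∃ _ : m < k, w ∈ towerB Λ m}

/-- `(Λ 0, Λ 1, …)` is an infinite perfect tower of (pairwise distinct, infinite)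
languages with terminal language `K`. -/
structure IsPerfectTower (Λ : ℕ → Set ℕ) (K : Set ℕ) : Prop where
  injective : Function.Injective Λ
  infinite : ∀ j, (Λ j).Infinite
  proper : ∀ j, Λ j ⊂ K
  nonempty : ∀ j, (towerB Λ j).Nonempty
  complete : (⋃ j, towerB Λ j) = K

/-- The topology on a collection `𝒳` of languages, generated by the basic open
sets `U_{M,F} = {A ∈ 𝒳 : F ⊆ A ⊆ M}` for `M ∈ 𝒳` and `F ⊆ ℕ` finite. -/
def XTop (𝒳 : Set (Set ℕ)) : TopologicalSpace ↥𝒳 :=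
  TopologicalSpace.generateFrom
    {U : Set ↥𝒳 | ∃ M ∈ 𝒳, ∃ F : Finset ℕ,
      U = {A : ↥𝒳 | ↑F ⊆ (A : Set ℕ) ∧ (A : Set ℕ) ⊆ M}}

/-- The derived set of `Y ⊆ 𝒳`: the set of limit points of `Y` in `(𝒳, T)`,
i.e. points every open neighborhood of which contains a member of `Y` different
from the point itself (accumulation points of `Y`). -/
def derivSet (𝒳 : Set (Set ℕ)) (Y : Set ↥𝒳) : Set ↥𝒳 :=
  {x | @AccPt _ (XTop 𝒳) x (Filter.principal Y)}

/-- The Cantor–Bendixson derivatives `𝒳^(i)` of the collection `𝒳`: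
`𝒳^(0) = 𝒳` and `𝒳^(i+1) = d(𝒳^(i))`. -/
def cbDeriv (𝒳 : Set (Set ℕ)) : ℕ → Set ↥𝒳
  | 0 => Set.univ
  | i + 1 => derivSet 𝒳 (cbDeriv 𝒳 i)

/-- A language `L'` in the collection is a limit point of the whole collection in
the topology `XTop` if and only if there is an infinite perfect tower of pairwise
distinct languages from the collection with terminal language `L'`. -/
lemma towerB_def (Λ : ℕ → Set ℕ) (k : ℕ) :
    towerB Λ k = {w | ∀ i, k ≤ i → w ∈ Λ i} \ {w | ∃ m, ∃ _ : m < k, w ∈ towerB Λ m} := by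
  rw [towerB]

lemma towerB_subset (Λ : ℕ → Set ℕ) (k : ℕ) :
    towerB Λ k ⊆ {w | ∀ i, k ≤ i → w ∈ Λ i} := by
  rw [towerB_def]; exact Set.diff_subset

lemma mem_iUnion_towerB (Λ : ℕ → Set ℕ) (w : ℕ) :
    (w ∈ ⋃ j, towerB Λ j) ↔ ∃ k, ∀ i, k ≤ i → w ∈ Λ i := by
  constructor
  · intro hw
    obtain ⟨j, hj⟩ := Set.mem_iUnion.1 hw
    exact ⟨j, towerB_subset Λ j hj⟩
  · rintro ⟨k, hk⟩
    classical
    have h : ∃ k, ∀ i, k ≤ i → w ∈ Λ i := ⟨k, hk⟩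
    refine Set.mem_iUnion.2 ⟨Nat.find h, ?_⟩
    rw [towerB_def]
    refine ⟨Nat.find_spec h, ?_⟩
    rintro ⟨j, hj, hwj⟩
    exact Nat.find_min h hj (towerB_subset Λ j hwj)

/-- Construction of a perfect tower from the approximation property. -/

lemma tower_of_approx (L : ℕ → Set ℕ) (hinf : ∀ i, (L i).Infinite)
    (L' : Set ℕ) (hL'inf : L'.Infinite)
    (H : ∀ F : Finset ℕ, ↑F ⊆ L' → ∃ A, A ∈ Set.range L ∧ A ≠ L' ∧ ↑F ⊆ A ∧ A ⊆ L') :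
    ∃ Λ : ℕ → Set ℕ, (∀ j, Λ j ∈ Set.range L) ∧ IsPerfectTower Λ L' := by
  classical
  -- enumeration of L'
  obtain ⟨e, he⟩ := (Set.to_countable L').exists_eq_range hL'inf.nonempty
  have heL : ∀ n, e n ∈ L' := fun n => he ▸ Set.mem_range_self n
  -- choice functions
  set chA : Finset ℕ → Set ℕ := fun F =>
    if h : ↑F ⊆ L' then (H F h).choose else ∅ with hchA
  have chA_spec : ∀ F : Finset ℕ, ↑F ⊆ L' →
      chA F ∈ Set.range L ∧ chA F ≠ L' ∧ ↑F ⊆ chA F ∧ chA F ⊆ L' := by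
    intro F h
    simp only [hchA, dif_pos h]
    exact (H F h).choose_spec
  set chX : Set ℕ → ℕ := fun A =>
    if h : (L' \ A).Nonempty then h.choose else 0 with hchX
  have chX_spec : ∀ A : Set ℕ, (L' \ A).Nonempty → chX A ∈ L' \ A := by
    intro A h
    simp only [hchX, dif_pos h]
    exact h.choose_spec
  -- the recursion on finite sets
  set Fs : ℕ → Finset ℕ := fun n =>
    Nat.rec {e 0} (fun n F => F ∪ {e (n + 1), chX (chA F)}) n with hFs
  set Λ : ℕ → Set ℕ := fun n => chA (Fs n) with hΛ
  set x : ℕ → ℕ := fun n => chX (Λ n) with hx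
  have hFsucc : ∀ n, Fs (n + 1) = Fs n ∪ {e (n + 1), x n} := fun n => rfl
  -- invariant
  have hFsub : ∀ n, ↑(Fs n) ⊆ L' := by
    intro n
    induction n with
    | zero =>
        have h0 : Fs 0 = {e 0} := rfl
        rw [h0]
        intro a ha
        rw [Finset.coe_singleton, Set.mem_singleton_iff] at ha
        exact ha ▸ heL 0
    | succ n ih =>
        have hA := chA_spec (Fs n) ih
        have hne : (L' \ Λ n).Nonempty := by
          obtain ⟨w, hw⟩ := Set.exists_of_ssubset
            (HasSubset.Subset.ssubset_of_ne hA.2.2.2 hA.2.1)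
          exact ⟨w, hw⟩
        have hxn := chX_spec (Λ n) hne
        rw [hFsucc n]
        intro a ha
        rcases Finset.mem_union.1 (Finset.mem_coe.1 ha) with h | h
        · exact ih h
        · rcases Finset.mem_insert.1 h with h | h
          · exact h ▸ heL (n + 1)
          · rw [Finset.mem_singleton.1 h]
            exact hxn.1
  have hAspec : ∀ n, Λ n ∈ Set.range L ∧ Λ n ≠ L' ∧ ↑(Fs n) ⊆ Λ n ∧ Λ n ⊆ L' :=
    fun n => chA_spec (Fs n) (hFsub n)
  have hxspec : ∀ n, x n ∈ L' \ Λ n := by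
    intro n
    refine chX_spec (Λ n) ?_
    obtain ⟨w, hw⟩ := Set.exists_of_ssubset
      (HasSubset.Subset.ssubset_of_ne (hAspec n).2.2.2 (hAspec n).2.1)
    exact ⟨w, hw⟩
  have hFmono : ∀ m n, m ≤ n → Fs m ⊆ Fs n := by
    intro m n hmn
    induction hmn with
    | refl => exact subset_rfl
    | step _ ih =>
        exact ih.trans (by rw [hFsucc]; exact Finset.subset_union_left)
  have he_mem : ∀ k, e k ∈ Fs k := by
    intro k
    cases k with
    | zero =>
        show e 0 ∈ ({e 0} : Finset ℕ)
        exact Finset.mem_singleton_self _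
    | succ k =>
        rw [hFsucc k]
        exact Finset.mem_union_right _ (Finset.mem_insert_self _ _)
  have hx_mem : ∀ n, x n ∈ Fs (n + 1) := by
    intro n
    rw [hFsucc n]
    exact Finset.mem_union_right _ (Finset.mem_insert_of_mem (Finset.mem_singleton_self _))
  -- key membership facts
  have heΛ : ∀ k i, k ≤ i → e k ∈ Λ i :=
    fun k i hki => (hAspec i).2.2.1 (hFmono k i hki (he_mem k))
  have hxΛ : ∀ n i, n + 1 ≤ i → x n ∈ Λ i :=
    fun n i hni => (hAspec i).2.2.1 (hFmono (n + 1) i hni (hx_mem n))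
  refine ⟨Λ, fun j => (hAspec j).1, ?_, ?_, ?_, ?_, ?_⟩
  · -- injective
    intro a b hab
    by_contra hne
    rcases Nat.lt_or_ge a b with h | h
    · exact (hxspec a).2 (hab ▸ hxΛ a b h)
    · have h' : b < a := lt_of_le_of_ne h (Ne.symm hne)
      exact (hxspec b).2 (hab ▸ hxΛ b a h')
  · -- infinite
    intro j
    obtain ⟨i, hi⟩ := (hAspec j).1
    exact hi ▸ hinf i
  · -- proper
    exact fun j => HasSubset.Subset.ssubset_of_ne (hAspec j).2.2.2 (hAspec j).2.1
  · -- nonempty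
    intro j
    cases j with
    | zero =>
        refine ⟨e 0, ?_⟩
        rw [towerB_def]
        exact ⟨fun i _ => heΛ 0 i (Nat.zero_le i), by rintro ⟨m, hm, _⟩; omega⟩
    | succ n =>
        refine ⟨x n, ?_⟩
        rw [towerB_def]
        refine ⟨fun i hi => hxΛ n i hi, ?_⟩
        rintro ⟨m, hm, hmem⟩
        exact (hxspec n).2 (towerB_subset Λ m hmem n (Nat.lt_succ_iff.1 hm))
  · -- complete
    ext w
    rw [mem_iUnion_towerB]
    constructor
    · rintro ⟨k, hk⟩
      exact (hAspec k).2.2.2 (hk k le_rfl)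
    · intro hw
      obtain ⟨k, rfl⟩ := he ▸ hw
      exact ⟨k, fun i hi => heΛ k i hi⟩

lemma nbhd_basis (𝒳 : Set (Set ℕ)) (x : ↥𝒳) (U : Set ↥𝒳)
    (hU : TopologicalSpace.GenerateOpen {U : Set ↥𝒳 | ∃ M ∈ 𝒳, ∃ F : Finset ℕ,
      U = {A : ↥𝒳 | ↑F ⊆ (A : Set ℕ) ∧ (A : Set ℕ) ⊆ M}} U) (hx : x ∈ U) :
    ∃ F : Finset ℕ, ↑F ⊆ (x : Set ℕ) ∧
      {A : ↥𝒳 | ↑F ⊆ (A : Set ℕ) ∧ (A : Set ℕ) ⊆ (x : Set ℕ)} ⊆ U := by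
  induction hU with
  | basic V hV =>
      obtain ⟨M, hM, F, rfl⟩ := hV
      obtain ⟨hF, hxM⟩ := hx
      exact ⟨F, hF, fun A hA => ⟨hA.1, hA.2.trans hxM⟩⟩
  | univ => exact ⟨∅, by simp, fun _ _ => trivial⟩
  | inter V W hV hW ihV ihW =>
      obtain ⟨F1, hF1, h1⟩ := ihV hx.1
      obtain ⟨F2, hF2, h2⟩ := ihW hx.2
      refine ⟨F1 ∪ F2, ?_, fun A hA => ⟨h1 ⟨?_, hA.2⟩, h2 ⟨?_, hA.2⟩⟩⟩
      · rw [Finset.coe_union]; exact Set.union_subset hF1 hF2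
      · exact fun a ha => hA.1 (by simpa using Or.inl (Finset.mem_coe.1 ha))
      · exact fun a ha => hA.1 (by simpa using Or.inr (Finset.mem_coe.1 ha))
  | sUnion S hS ih =>
      obtain ⟨V, hVS, hxV⟩ := hx
      obtain ⟨F, hF, h⟩ := ih V hVS hxV
      exact ⟨F, hF, h.trans (Set.subset_sUnion_of_mem hVS)⟩

theorem stmt13 (L : ℕ → Set ℕ) (hinf : ∀ i, (L i).Infinite)
    (L' : Set ℕ) (hL' : L' ∈ Set.range L) :
    (⟨L', hL'⟩ : ↥(Set.range L)) ∈ derivSet (Set.range L) Set.univ ↔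
      ∃ Λ : ℕ → Set ℕ, (∀ j, Λ j ∈ Set.range L) ∧ IsPerfectTower Λ L' := by
  classical
  letI : TopologicalSpace ↥(Set.range L) := XTop (Set.range L)
  constructor
  · intro hmem
    have hL'inf : L'.Infinite := by obtain ⟨i, rfl⟩ := hL'; exact hinf i
    apply tower_of_approx L hinf L' hL'inf
    intro F hF
    have hacc : ∀ U ∈ nhds (⟨L', hL'⟩ : ↥(Set.range L)),
        ∃ y ∈ U ∩ Set.univ, y ≠ (⟨L', hL'⟩ : ↥(Set.range L)) :=
      accPt_iff_nhds.1 hmem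
    have hUopen : IsOpen {A : ↥(Set.range L) | ↑F ⊆ (A : Set ℕ) ∧ (A : Set ℕ) ⊆ L'} :=
      TopologicalSpace.GenerateOpen.basic _ ⟨L', hL', F, rfl⟩
    have hUnhds : {A : ↥(Set.range L) | ↑F ⊆ (A : Set ℕ) ∧ (A : Set ℕ) ⊆ L'}
        ∈ nhds (⟨L', hL'⟩ : ↥(Set.range L)) :=
      hUopen.mem_nhds ⟨hF, subset_rfl⟩
    obtain ⟨y, ⟨hyU, -⟩, hy⟩ := hacc _ hUnhds
    exact ⟨↑y, y.2, fun h => hy (Subtype.ext h), hyU.1, hyU.2⟩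
  · rintro ⟨Λ, hΛX, hT⟩
    show AccPt (⟨L', hL'⟩ : ↥(Set.range L)) (Filter.principal Set.univ)
    rw [accPt_iff_nhds]
    intro U hU
    rw [mem_nhds_iff] at hU
    obtain ⟨t, htU, htopen, hxt⟩ := hU
    obtain ⟨F, hF, hsub⟩ := nbhd_basis (Set.range L) ⟨L', hL'⟩ t htopen hxt
    have key : ∀ w ∈ F, ∃ k, ∀ i, k ≤ i → w ∈ Λ i := by
      intro w hw
      have hwL : w ∈ L' := hF (Finset.mem_coe.2 hw)
      rw [← hT.complete] at hwL
      exact (mem_iUnion_towerB Λ w).1 hwL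
    choose k hk using key
    obtain ⟨N, hN⟩ : ∃ N, ∀ w ∈ F, w ∈ Λ N := by
      refine ⟨F.sup (fun w => if h : w ∈ F then k w h else 0), fun w hw => ?_⟩
      have hle : k w hw ≤ F.sup (fun w => if h : w ∈ F then k w h else 0) := by
        have := Finset.le_sup (f := fun w => if h : w ∈ F then k w h else 0) hw
        simpa only [dif_pos hw] using this
      exact hk w hw _ hle
    refine ⟨⟨Λ N, hΛX N⟩, ⟨htU (hsub ⟨fun w hw => hN w (Finset.mem_coe.1 hw),
      (hT.proper N).1⟩), trivial⟩, ?_⟩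
    intro h
    exact (hT.proper N).ne (congrArg Subtype.val h)
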